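/- Let ξ : ℂ → ℂ be an entire function, not identically zero, with ξ(s) = ξ(1-s) (or ξ(s) = -ξ(1-s)), and suppose ξ(1/(1-z)) is analytic and nonvanishing on the open unit disk except possibly at points corresponding to zeros on Re s = 1/2. Define λ(n+1) as the Taylor coefficients of φ'(z)/φ(z) at z = 0, where φ(z) = ξ(1/(1-z)). If the power series ∑ λ(n+1) z^n converges for all |z| < 1, then all zeros of ξ lie on the line Re s = 1/2. -/

import Mathlib

open Filter

theorem zeros_on_critical_line_of_log_deriv_series_converges
    (ξ : ℂ → ℂ) (hξ : Differentiable ℂ ξ) (hne : ∃ s : ℂ, ξ s ≠ 0)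
    (hfe : (∀ s : ℂ, ξ s = ξ (1 - s)) ∨ (∀ s : ℂ, ξ s = -ξ (1 - s)))
    (lam : ℕ → ℂ)
    (hlam : ∀ᶠ z in nhds (0 : ℂ),
      deriv (fun w : ℂ => ξ (1 / (1 - w))) z / ξ (1 / (1 - z)) =
        ∑' n : ℕ, lam (n + 1) * z ^ n)
    (hconv : ∀ z : ℂ, ‖z‖ < 1 → Summable fun n : ℕ => lam (n + 1) * z ^ n) :
    ∀ s : ℂ, ξ s = 0 → s.re = 1 / 2 := by
  set φ : ℂ → ℂ := fun w : ℂ => ξ (1 / (1 - w)) with hφdef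
  have hUopen : IsOpen {z : ℂ | z ≠ 1} := isOpen_ne
  have hφU : AnalyticOnNhd ℂ φ {z : ℂ | z ≠ 1} := by
    apply DifferentiableOn.analyticOnNhd _ hUopen
    intro z hz
    apply DifferentiableAt.differentiableWithinAt
    have h1 : (1 : ℂ) - z ≠ 0 := sub_ne_zero.mpr (Ne.symm hz)
    exact (hξ.differentiableAt).comp z
      ((differentiableAt_const 1).div ((differentiableAt_const 1).sub differentiableAt_id) h1)
  have hball : Metric.ball (0:ℂ) 1 ⊆ {z : ℂ | z ≠ 1} := by
    intro z hz
    simp only [Metric.mem_ball, dist_zero_right] at hz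
    intro h
    rw [h] at hz
    simp at hz
  have h0ball : (0:ℂ) ∈ Metric.ball (0:ℂ) 1 := by simp
  -- the power series
  set p := FormalMultilinearSeries.ofScalars ℂ (fun n => lam (n+1)) with hp
  have hrad : 1 ≤ p.radius := by
    apply ENNReal.le_of_forall_nnreal_lt
    intro r hr
    have hr1 : (r : ℝ) < 1 := by exact_mod_cast hr
    have hs : Summable fun n : ℕ => lam (n+1) * ((r : ℝ) : ℂ) ^ n := by
      apply hconv
      simpa using (abs_of_nonneg r.2 ▸ hr1 : |((r:ℝ))| < 1)
    have ht := tendsto_zero_iff_norm_tendsto_zero.mp hs.tendsto_atTop_zero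
    have hnorm : ∀ n, ‖p n‖ = ‖lam (n+1)‖ := fun n =>
      FormalMultilinearSeries.ofScalars_norm ℂ (fun n => lam (n+1)) n
    have ht2 : Tendsto (fun n => ‖p n‖ * (r:ℝ)^n) atTop (nhds 0) := by
      convert ht using 2 with n
      rw [hnorm, norm_mul, norm_pow, Complex.norm_real, Real.norm_eq_abs,
        abs_of_nonneg r.coe_nonneg]
    exact p.le_radius_of_tendsto ht2
  have hradpos : 0 < p.radius := lt_of_lt_of_le one_pos hrad
  have hFb := p.hasFPowerSeriesOnBall hradpos
  have hFan : ∀ z : ℂ, ‖z‖ < 1 → AnalyticAt ℂ p.sum z := by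
    intro z hz
    apply hFb.analyticAt_of_mem
    rw [EMetric.mem_ball, edist_zero_right]
    refine lt_of_lt_of_le ?_ hrad
    have : ‖z‖₊ < 1 := by rwa [← NNReal.coe_lt_coe, coe_nnnorm, NNReal.coe_one]
    rw [enorm_eq_nnnorm]; exact_mod_cast this
  have hpsum : ∀ z : ℂ, p.sum z = ∑' n : ℕ, lam (n + 1) * z ^ n := by
    intro z
    rw [FormalMultilinearSeries.sum]
    apply tsum_congr
    intro n
    rw [hp, FormalMultilinearSeries.ofScalars_apply_eq, smul_eq_mul]
  -- φ is not identically zero near 0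
  have hnz : ¬ ∀ᶠ z in nhds (0:ℂ), φ z = 0 := by
    intro h
    have hc : ContinuousAt (fun s : ℂ => 1 - 1/s) 1 := by
      exact (continuousAt_const.sub (continuousAt_const.div continuousAt_id one_ne_zero))
    have hc' : Tendsto (fun s : ℂ => 1 - 1/s) (nhds 1) (nhds 0) := by
      have h := hc.tendsto
      norm_num at h
      simpa [one_div] using h
    have h1 : ∀ᶠ s in nhds (1:ℂ), φ (1 - 1/s) = 0 := hc'.eventually h
    have h2 : ∀ᶠ s in nhds (1:ℂ), ξ s = 0 := by
      filter_upwards [h1, eventually_ne_nhds (one_ne_zero : (1:ℂ) ≠ 0)] with s h3 h4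
      have : φ (1 - 1/s) = ξ s := by
        simp only [hφdef]
        rw [sub_sub_cancel, one_div_one_div]
      rwa [this] at h3
    have hξan : AnalyticOnNhd ℂ ξ Set.univ :=
      hξ.differentiableOn.analyticOnNhd isOpen_univ
    obtain ⟨s, hsne⟩ := hne
    exact hsne (hξan.eqOn_zero_of_preconnected_of_eventuallyEq_zero isPreconnected_univ
      (Set.mem_univ 1) h2 (Set.mem_univ s))
  have hφan0 : AnalyticAt ℂ φ 0 := hφU 0 (hball h0ball)
  have hφne : ∀ᶠ z in nhdsWithin (0:ℂ) {(0:ℂ)}ᶜ, φ z ≠ 0 :=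
    hφan0.eventually_eq_zero_or_eventually_ne_zero.resolve_left hnz
  -- deriv φ = φ * p.sum near 0
  have heq : ∀ᶠ z in nhds (0:ℂ), deriv φ z = φ z * p.sum z := by
    have h1 : ∀ᶠ z in nhdsWithin (0:ℂ) {(0:ℂ)}ᶜ, deriv φ z = φ z * p.sum z := by
      filter_upwards [hφne, hlam.filter_mono nhdsWithin_le_nhds] with z h2 h3
      rw [← hpsum] at h3
      rw [div_eq_iff h2] at h3
      rw [h3]; ring
    exact ((hφU.deriv 0 (hball h0ball)).frequently_eq_iff_eventually_eq
      (hφan0.mul (hFan 0 (by simp)))).mp h1.frequently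
  -- extend to the whole ball by the identity theorem
  have hEqOn : Set.EqOn (deriv φ) (fun z => φ z * p.sum z) (Metric.ball (0:ℂ) 1) := by
    apply AnalyticOnNhd.eqOn_of_preconnected_of_eventuallyEq
      ((hφU.deriv).mono hball)
      (fun z hz => (hφU z (hball hz)).mul (hFan z (by simpa using hz)))
      (convex_ball (0:ℂ) 1).isPreconnected h0ball heq
  -- key: no zeros with re > 1/2
  have key : ∀ s : ℂ, 1/2 < s.re → ξ s ≠ 0 := by
    intro s hs hzero
    have hs0 : s ≠ 0 := by
      intro h; rw [h] at hs; norm_num at hs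
    set z₀ : ℂ := 1 - 1/s with hz₀def
    have hz₀s : 1/(1 - z₀) = s := by
      rw [hz₀def]; field_simp; ring
    have hz₀ball : z₀ ∈ Metric.ball (0:ℂ) 1 := by
      simp only [Metric.mem_ball, dist_zero_right]
      have h1 : z₀ = (s - 1)/s := by rw [hz₀def]; field_simp
      rw [h1, norm_div]
      rw [div_lt_one (norm_pos_iff.mpr hs0)]
      have e1 : ‖s - 1‖^2 = Complex.normSq (s - 1) := by
        rw [Complex.sq_norm]
      have e2 : ‖s‖^2 = Complex.normSq s := by
        rw [Complex.sq_norm]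
      have h2 : Complex.normSq (s - 1) < Complex.normSq s := by
        simp only [Complex.normSq_apply, Complex.sub_re, Complex.sub_im, Complex.one_re,
          Complex.one_im]
        nlinarith
      nlinarith [norm_nonneg (s - 1), norm_nonneg s, e1, e2]
    have hφz₀ : φ z₀ = 0 := by
      simp only [hφdef]
      rw [hz₀s]; exact hzero
    have hφan₀ : AnalyticAt ℂ φ z₀ := hφU z₀ (hball hz₀ball)
    have hnotz₀ : ¬ ∀ᶠ z in nhds z₀, φ z = 0 := by
      intro h
      apply hnz
      have hEq0 : Set.EqOn φ 0 (Metric.ball (0:ℂ) 1) :=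
        (hφU.mono hball).eqOn_zero_of_preconnected_of_eventuallyEq_zero
          (convex_ball (0:ℂ) 1).isPreconnected hz₀ball h
      exact Filter.eventually_of_mem (Metric.ball_mem_nhds 0 one_pos)
        (fun z hz => hEq0 hz)
    have hord : analyticOrderAt φ z₀ ≠ ⊤ := by
      simp only [ne_eq, analyticOrderAt_eq_top]; exact hnotz₀
    obtain ⟨k, hk⟩ := WithTop.ne_top_iff_exists.mp hord
    obtain ⟨g, hg_an, hg_ne, hg_eq⟩ := (hφan₀.analyticOrderAt_eq_natCast (n := k)).mp hk.symm
    have hk0 : k ≠ 0 := by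
      intro h
      rw [h] at hg_eq
      simp only [pow_zero, one_smul] at hg_eq
      exact hg_ne (hg_eq.self_of_nhds ▸ hφz₀)
    obtain ⟨m, rfl⟩ := Nat.exists_eq_succ_of_ne_zero hk0
    -- deriv g analytic at z₀
    have hdg_an : AnalyticAt ℂ (deriv g) z₀ := by
      obtain ⟨t, htmem, ht⟩ := hg_an.eventually_analyticAt.exists_mem
      obtain ⟨u, hut, huo, hu0⟩ := mem_nhds_iff.mp htmem
      exact (AnalyticOnNhd.deriv (fun z hz => ht z (hut hz))) z₀ hu0
    -- A z := k * g z + (z - z₀) * (deriv g z - g z * p.sum z)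
    set A : ℂ → ℂ := fun z =>
      ((m:ℂ)+1) * g z + (z - z₀) * (deriv g z - g z * p.sum z) with hA
    have hA_an : AnalyticAt ℂ A z₀ := by
      apply AnalyticAt.add
      · exact analyticAt_const.mul hg_an
      · exact ((analyticAt_id.sub analyticAt_const)).mul
          (hdg_an.sub (hg_an.mul (hFan z₀ (by simpa using hz₀ball))))
    -- A vanishes on a punctured neighborhood of z₀
    have hAz : ∀ᶠ z in nhdsWithin z₀ {z₀}ᶜ, A z = 0 := by
      have hgd : ∀ᶠ z in nhds z₀, DifferentiableAt ℂ g z := by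
        filter_upwards [hg_an.eventually_analyticAt] with z hz using hz.differentiableAt
      have hder : deriv φ =ᶠ[nhds z₀] deriv (fun z => (z - z₀)^(m+1) * g z) := by
        apply Filter.EventuallyEq.deriv
        filter_upwards [hg_eq] with z hz
        rw [hz, smul_eq_mul]
      have hballz : ∀ᶠ z in nhds z₀, z ∈ Metric.ball (0:ℂ) 1 :=
        Metric.isOpen_ball.mem_nhds hz₀ball
      have hmain : ∀ᶠ z in nhds z₀,
          ((m:ℂ)+1) * (z - z₀)^m * g z + (z - z₀)^(m+1) * deriv g z
            = (z - z₀)^(m+1) * g z * p.sum z := by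
        filter_upwards [hder, hballz, hgd, hg_eq] with z h1 h2 h3 h4
        have hd : HasDerivAt (fun z => (z - z₀)^(m+1) * g z)
            (((m:ℂ)+1) * (z - z₀)^m * g z + (z - z₀)^(m+1) * deriv g z) z := by
          have hpow : HasDerivAt (fun z : ℂ => (z - z₀)^(m+1))
              (((m:ℂ)+1) * (z - z₀)^m) z := by
            have := ((hasDerivAt_id z).sub_const z₀).fun_pow (m+1)
            simpa using this
          simpa using hpow.fun_mul h3.hasDerivAt
        have h5 : deriv φ z = φ z * p.sum z := hEqOn h2
        rw [h1, hd.deriv] at h5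
        rw [h5, h4, smul_eq_mul]
      rw [eventually_nhdsWithin_iff]
      filter_upwards [hmain] with z h1 h2
      have hzne : z - z₀ ≠ 0 := sub_ne_zero.mpr h2
      have h6 : A z * (z - z₀)^m = 0 := by
        have : A z * (z - z₀)^m =
            (((m:ℂ)+1) * (z - z₀)^m * g z + (z - z₀)^(m+1) * deriv g z)
              - (z - z₀)^(m+1) * g z * p.sum z := by
          rw [hA]; ring
        rw [this, h1]; ring
      rcases mul_eq_zero.mp h6 with h | h
      · exact h
      · exact absurd h (pow_ne_zero m hzne)
    -- conclude A z₀ = 0, contradiction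
    have hAev : ∀ᶠ z in nhds z₀, A z = 0 :=
      hA_an.frequently_zero_iff_eventually_zero.mp hAz.frequently
    have hA0 : A z₀ = 0 := hAev.self_of_nhds
    rw [hA] at hA0
    simp only [sub_self, zero_mul, add_zero] at hA0
    rcases mul_eq_zero.mp hA0 with h | h
    · exact Nat.cast_add_one_ne_zero m h
    · exact hg_ne h
  -- wrap up via the functional equation
  intro s hs
  by_contra hre
  rcases lt_or_gt_of_ne hre with h | h
  · have h1 : ξ (1 - s) = 0 := by
      rcases hfe with hf | hf
      · rw [hf (1 - s), sub_sub_cancel]; exact hs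
      · rw [hf (1 - s), sub_sub_cancel, hs, neg_zero]
    refine key (1 - s) ?_ h1
    simp only [Complex.sub_re, Complex.one_re]
    linarith
  · exact key s h hs
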